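/- arXiv:1801.02321 — 4 statements merged into one kernel-verified Lean document; each statement's English description precedes it below -/
import Mathlib

section
/- For all α, ψ, ψ₁, ψ₂ > 0, the log-t density p_t(λ) = c·λ^{−1}·(1 + (log λ)²/(αψ²))^{−(α+1)/2} and the log-Laplace density p_LL(λ|ψ₁,ψ₂) satisfy lim_{λ→0⁺} p_t(λ)/p_LL(λ) = ∞ and lim_{λ→∞} p_t(λ)/p_LL(λ) = ∞. -/
open Real Filter

lemma core_lemma (a b p C : ℝ) (ha : 0 < a) (hb : 0 < b) (hp : 0 ≤ p) (hC : 0 < C) :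
    Tendsto (fun t : ℝ => C * Real.exp (a * t) * (1 + t ^ 2 / b) ^ (-p)) atTop atTop := by
  have hK : (0:ℝ) < (1 + 1 / b) ^ (-p) := Real.rpow_pos_of_pos (by positivity) _
  have hmain : Tendsto (fun t : ℝ => (C * (1 + 1 / b) ^ (-p)) * (Real.exp (a * t) / t ^ (2 * p)))
      atTop atTop :=
    (tendsto_exp_mul_div_rpow_atTop (2 * p) a ha).const_mul_atTop (by positivity)
  apply tendsto_atTop_mono' atTop ?_ hmain
  filter_upwards [eventually_ge_atTop 1] with t ht
  have ht0 : (0:ℝ) < t := lt_of_lt_of_le one_pos ht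
  have h1 : (1 + t ^ 2 / b) ≤ (1 + 1 / b) * t ^ 2 := by
    have h : (1:ℝ) ≤ t ^ 2 := by nlinarith
    have e : (1 + 1 / b) * t ^ 2 = t ^ 2 + t ^ 2 / b := by field_simp
    rw [e]; linarith
  have h2 : ((1 + 1 / b) * t ^ 2) ^ (-p) ≤ (1 + t ^ 2 / b) ^ (-p) :=
    Real.rpow_le_rpow_of_nonpos (by positivity) h1 (neg_nonpos.mpr hp)
  have h3 : ((1 + 1 / b) * t ^ 2) ^ (-p) = (1 + 1 / b) ^ (-p) * (t ^ (2 * p))⁻¹ := by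
    rw [Real.mul_rpow (by positivity) (by positivity), ← Real.rpow_natCast t 2,
      ← Real.rpow_mul ht0.le, ← Real.rpow_neg ht0.le]
    norm_num
  calc C * (1 + 1 / b) ^ (-p) * (Real.exp (a * t) / t ^ (2 * p))
      = C * Real.exp (a * t) * ((1 + 1 / b) * t ^ 2) ^ (-p) := by
        rw [h3]; ring
    _ ≤ C * Real.exp (a * t) * (1 + t ^ 2 / b) ^ (-p) := by
        apply mul_le_mul_of_nonneg_left h2 (by positivity)


/-- The log-t density dominates every log-Laplace density near λ = 0 and as
λ → ∞: the ratio p_t(λ|α,ψ)/p_LL(λ|ψ₁,ψ₂) tends to ∞ in both limits, for all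
α, ψ, ψ₁, ψ₂ > 0. -/
theorem log_t_dominates_log_laplace (α ψ ψ₁ ψ₂ : ℝ)
    (hα : 0 < α) (hψ : 0 < ψ) (h₁ : 0 < ψ₁) (h₂ : 0 < ψ₂) :
    Tendsto
      (fun l : ℝ =>
        (Real.Gamma ((α + 1) / 2) / (Real.Gamma (α / 2) * Real.sqrt (π * α) * ψ) *
            l⁻¹ * (1 + (Real.log l) ^ 2 / (α * ψ ^ 2)) ^ (-(α + 1) / 2)) /
          (if l ≤ 1 then (1 / (2 * ψ₁)) * l ^ (-1 + 1 / ψ₁)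
           else (1 / (2 * ψ₂)) * l ^ (-1 - 1 / ψ₂)))
      (nhdsWithin 0 (Set.Ioi 0)) atTop ∧
    Tendsto
      (fun l : ℝ =>
        (Real.Gamma ((α + 1) / 2) / (Real.Gamma (α / 2) * Real.sqrt (π * α) * ψ) *
            l⁻¹ * (1 + (Real.log l) ^ 2 / (α * ψ ^ 2)) ^ (-(α + 1) / 2)) /
          (if l ≤ 1 then (1 / (2 * ψ₁)) * l ^ (-1 + 1 / ψ₁)
           else (1 / (2 * ψ₂)) * l ^ (-1 - 1 / ψ₂)))
      atTop atTop := by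
  set c : ℝ := Real.Gamma ((α + 1) / 2) / (Real.Gamma (α / 2) * Real.sqrt (π * α) * ψ) with hc_def
  have hc : 0 < c := by
    apply div_pos (Real.Gamma_pos_of_pos (by linarith))
    exact mul_pos (mul_pos (Real.Gamma_pos_of_pos (by linarith))
      (Real.sqrt_pos.mpr (mul_pos Real.pi_pos hα))) hψ
  set b : ℝ := α * ψ ^ 2 with hb_def
  have hb : 0 < b := by positivity
  set p : ℝ := (α + 1) / 2 with hp_def
  have hp : 0 ≤ p := by positivity
  have hnegp : ∀ x : ℝ, (-(α + 1) / 2 : ℝ) = -p := by intro x; rw [hp_def]; ring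
  constructor
  · -- limit at 0⁺
    have hcomp : Tendsto (fun l : ℝ =>
        (2 * ψ₁ * c) * Real.exp ((1 / ψ₁) * (-Real.log l)) *
          (1 + (-Real.log l) ^ 2 / b) ^ (-p)) (nhdsWithin 0 (Set.Ioi 0)) atTop := by
      have h := (core_lemma (1 / ψ₁) b p (2 * ψ₁ * c) (by positivity) hb hp (by positivity))
      have hneg : Tendsto (fun x : ℝ => -x) atBot atTop := tendsto_neg_atBot_atTop
      exact (h.comp hneg).comp tendsto_log_nhdsGT_zero
    apply hcomp.congr'
    have h1 : ∀ᶠ l : ℝ in nhdsWithin 0 (Set.Ioi 0), l ∈ Set.Ioi (0:ℝ) :=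
      self_mem_nhdsWithin
    have h2 : ∀ᶠ l : ℝ in nhdsWithin 0 (Set.Ioi 0), l < 1 :=
      eventually_nhdsWithin_of_eventually_nhds (eventually_lt_nhds (by norm_num))
    filter_upwards [h1, h2] with l hl hl1
    have hl0 : (0:ℝ) < l := hl
    have hle : l ≤ 1 := hl1.le
    rw [if_pos hle]
    have hpow : (0:ℝ) < l ^ (-1 + 1 / ψ₁) := Real.rpow_pos_of_pos hl0 _
    have key : l⁻¹ / l ^ (-1 + 1 / ψ₁) = Real.exp ((1 / ψ₁) * (-Real.log l)) := by
      rw [← Real.rpow_neg_one l, ← Real.rpow_sub hl0, Real.rpow_def_of_pos hl0]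
      ring_nf
    have hX : (1 + (-Real.log l) ^ 2 / b) ^ (-p) = (1 + (Real.log l) ^ 2 / b) ^ (-p) := by
      rw [neg_sq]
    rw [hX, hnegp l]
    rw [eq_div_iff (by positivity)]
    rw [← key]
    field_simp
  · -- limit at ∞
    have hcomp : Tendsto (fun l : ℝ =>
        (2 * ψ₂ * c) * Real.exp ((1 / ψ₂) * Real.log l) *
          (1 + (Real.log l) ^ 2 / b) ^ (-p)) atTop atTop := by
      have h := (core_lemma (1 / ψ₂) b p (2 * ψ₂ * c) (by positivity) hb hp (by positivity))
      exact h.comp tendsto_log_atTop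
    apply hcomp.congr'
    filter_upwards [eventually_gt_atTop (1:ℝ)] with l hl
    have hl0 : (0:ℝ) < l := lt_trans one_pos hl
    rw [if_neg (not_le.mpr hl)]
    have hpow : (0:ℝ) < l ^ (-1 - 1 / ψ₂) := Real.rpow_pos_of_pos hl0 _
    have key : l⁻¹ / l ^ (-1 - 1 / ψ₂) = Real.exp ((1 / ψ₂) * Real.log l) := by
      rw [← Real.rpow_neg_one l, ← Real.rpow_sub hl0, Real.rpow_def_of_pos hl0]
      ring_nf
    rw [hnegp l]
    rw [eq_div_iff (by positivity)]
    rw [← key]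
    field_simp
end

section
/- The density over the shrinkage factor κ ∈ (0,1) induced by a log-t prior, p_t(κ|α,ψ) ∝ κ^{−1}(1−κ)^{−1}(1 + atanh(1−2κ)²/(αψ²))^{−(α+1)/2}, diverges at both endpoints: lim_{κ→0⁺} p_t(κ|α,ψ) = ∞ and lim_{κ→1⁻} p_t(κ|α,ψ) = ∞, for all α > 0 and ψ > 0. -/
open Real Filter Set Topology

/-- Inverse hyperbolic tangent. -/
noncomputable def atanh (x : ℝ) : ℝ := (1 / 2) * Real.log ((1 + x) / (1 - x))

lemma aux_exp_atanh {κ : ℝ} (h0 : 0 < κ) (h1 : κ < 1) :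
    Real.exp (2 * atanh (1 - 2 * κ)) = (1 - κ) / κ := by
  have h : (1 + (1 - 2*κ)) / (1 - (1 - 2*κ)) = (1 - κ)/κ := by
    rw [div_eq_div_iff (by linarith) (by linarith)]; ring
  rw [atanh, h, show 2 * ((1/2 : ℝ) * Real.log ((1-κ)/κ)) = Real.log ((1-κ)/κ) by ring]
  exact Real.exp_log (div_pos (by linarith) h0)

lemma aux_tendsto_atanh_zero :
    Tendsto (fun κ : ℝ => atanh (1 - 2 * κ)) (𝓝[>] (0:ℝ)) atTop := by
  have h2 : Tendsto (fun κ : ℝ => 2*κ) (𝓝[>] (0:ℝ)) (𝓝[>] (0:ℝ)) := by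
    apply tendsto_nhdsWithin_of_tendsto_nhds_of_eventually_within
    · have h : Continuous (fun κ : ℝ => 2*κ) := by continuity
      have := (h.tendsto 0).mono_left (nhdsWithin_le_nhds (s := Set.Ioi (0:ℝ)))
      simpa using this
    · filter_upwards [self_mem_nhdsWithin] with κ (hκ : 0 < κ)
      exact mul_pos two_pos hκ
  have hinv : Tendsto (fun κ : ℝ => (2*κ)⁻¹) (𝓝[>] (0:ℝ)) atTop :=
    tendsto_inv_nhdsGT_zero.comp h2
  have hnum : Tendsto (fun κ : ℝ => 2 - 2*κ) (𝓝[>] (0:ℝ)) (𝓝 2) := by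
    have h : Continuous (fun κ : ℝ => 2 - 2*κ) := by continuity
    have := (h.tendsto 0).mono_left (nhdsWithin_le_nhds (s := Set.Ioi (0:ℝ)))
    simpa using this
  have hfrac : Tendsto (fun κ : ℝ => (2 - 2*κ) * (2*κ)⁻¹) (𝓝[>] (0:ℝ)) atTop :=
    hnum.pos_mul_atTop two_pos hinv
  have hlog := Real.tendsto_log_atTop.comp hfrac
  have := hlog.const_mul_atTop (by norm_num : (0:ℝ) < 1/2)
  refine this.congr fun κ => ?_
  rw [atanh, show (1:ℝ) + (1 - 2*κ) = 2 - 2*κ by ring,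
    show (1:ℝ) - (1 - 2*κ) = 2*κ by ring, div_eq_mul_inv]
  rfl

lemma aux_tendsto_atanh_one :
    Tendsto (fun κ : ℝ => -atanh (1 - 2 * κ)) (𝓝[<] (1:ℝ)) atTop := by
  have h2 : Tendsto (fun κ : ℝ => 2 - 2*κ) (𝓝[<] (1:ℝ)) (𝓝[>] (0:ℝ)) := by
    apply tendsto_nhdsWithin_of_tendsto_nhds_of_eventually_within
    · have h : Continuous (fun κ : ℝ => 2 - 2*κ) := by continuity
      have := (h.tendsto 1).mono_left (nhdsWithin_le_nhds (s := Set.Iio (1:ℝ)))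
      simpa using this
    · filter_upwards [self_mem_nhdsWithin] with κ (hκ : κ < 1)
      simp only [Set.mem_Ioi]; linarith
  have hinv : Tendsto (fun κ : ℝ => (2 - 2*κ)⁻¹) (𝓝[<] (1:ℝ)) atTop :=
    tendsto_inv_nhdsGT_zero.comp h2
  have hnum : Tendsto (fun κ : ℝ => 2*κ) (𝓝[<] (1:ℝ)) (𝓝 2) := by
    have h : Continuous (fun κ : ℝ => 2*κ) := by continuity
    have := (h.tendsto 1).mono_left (nhdsWithin_le_nhds (s := Set.Iio (1:ℝ)))
    simpa using this
  have hfrac : Tendsto (fun κ : ℝ => (2*κ) * (2 - 2*κ)⁻¹) (𝓝[<] (1:ℝ)) atTop :=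
    hnum.pos_mul_atTop two_pos hinv
  have hlog := Real.tendsto_log_atTop.comp hfrac
  have key := hlog.const_mul_atTop (by norm_num : (0:ℝ) < 1/2)
  apply key.congr'
  filter_upwards [Ioo_mem_nhdsLT_of_mem (by norm_num : (1:ℝ) ∈ Set.Ioc 0 1)]
    with κ hκ
  obtain ⟨h0, h1⟩ := hκ
  have e1 : (2*κ) * (2 - 2*κ)⁻¹ = ((1-κ)/κ)⁻¹ := by
    rw [inv_div, ← div_eq_mul_inv, div_eq_div_iff (by linarith) (by linarith)]; ring
  show 1/2 * Real.log ((2*κ) * (2 - 2*κ)⁻¹) = -atanh (1 - 2*κ)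
  rw [e1, Real.log_inv, atanh, show (1:ℝ) + (1 - 2*κ) = 2 - 2*κ by ring,
    show (1:ℝ) - (1 - 2*κ) = 2*κ by ring,
    show (2 - 2*κ)/(2*κ) = (1-κ)/κ from by
      rw [div_eq_div_iff (by linarith) (by linarith)]; ring]
  ring


lemma aux_G (c s p : ℝ) (hc : 0 < c) (hs : 0 < s) (hp : 0 < p) :
    Tendsto (fun u : ℝ => c * (Real.exp (2*u) * (1 + u^2/s) ^ (-p))) atTop atTop := by
  have hC : 0 < c * (1 + 1/s) ^ (-p) := by positivity
  have base := (tendsto_exp_mul_div_rpow_atTop (2*p) 2 two_pos).const_mul_atTop hC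
  refine tendsto_atTop_mono' atTop ?_ base
  filter_upwards [eventually_ge_atTop (1:ℝ)] with u hu
  have hu0 : 0 < u := lt_of_lt_of_le one_pos hu
  have h1 : ((1 + 1/s) * u^2) ^ (-p) ≤ (1 + u^2/s) ^ (-p) := by
    apply Real.rpow_le_rpow_of_nonpos (by positivity) _ (by linarith)
    have husq : 1 ≤ u^2 := by nlinarith [sq_nonneg (u-1)]
    have heq : (1 + 1/s) * u^2 = u^2 + u^2/s := by ring
    rw [heq]; linarith
  have h2 : ((1 + 1/s) * u^2) ^ (-p) = (1 + 1/s) ^ (-p) * (u ^ (2*p))⁻¹ := by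
    rw [Real.mul_rpow (by positivity) (by positivity)]
    congr 1
    rw [← Real.rpow_natCast u 2, ← Real.rpow_mul hu0.le, ← Real.rpow_neg hu0.le]
    push_cast
    ring_nf
  calc c * (1 + 1/s) ^ (-p) * (Real.exp (2*u) / u ^ (2*p))
      = c * (Real.exp (2*u) * ((1 + 1/s) ^ (-p) * (u ^ (2*p))⁻¹)) := by
        rw [div_eq_mul_inv]; ring
    _ ≤ c * (Real.exp (2*u) * (1 + u^2/s) ^ (-p)) := by
        rw [← h2]
        apply mul_le_mul_of_nonneg_left (mul_le_mul_of_nonneg_left h1 (Real.exp_pos _).le) hc.le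



/-- The density over the shrinkage factor κ induced by a log-t prior,
p_t(κ|α,ψ) ∝ κ⁻¹(1−κ)⁻¹(1 + atanh(1−2κ)²/(αψ²))^{−(α+1)/2}, diverges as
κ → 0⁺ and as κ → 1⁻, for all α, ψ > 0 (and any proportionality constant
c > 0). -/
theorem log_t_kappa_density_diverges (α ψ c : ℝ)
    (hα : 0 < α) (hψ : 0 < ψ) (hc : 0 < c) :
    Tendsto
      (fun κ : ℝ => c * (κ⁻¹ * (1 - κ)⁻¹ *
        (1 + (atanh (1 - 2 * κ)) ^ 2 / (α * ψ ^ 2)) ^ (-(α + 1) / 2)))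
      (nhdsWithin 0 (Set.Ioi 0)) atTop ∧
    Tendsto
      (fun κ : ℝ => c * (κ⁻¹ * (1 - κ)⁻¹ *
        (1 + (atanh (1 - 2 * κ)) ^ 2 / (α * ψ ^ 2)) ^ (-(α + 1) / 2)))
      (nhdsWithin 1 (Set.Iio 1)) atTop := by
  have hs : (0:ℝ) < α * ψ ^ 2 := by positivity
  have hp : (0:ℝ) < (α + 1) / 2 := by linarith
  have hexp : -(α + 1) / 2 = -((α + 1) / 2) := by ring
  have hG := aux_G c (α * ψ ^ 2) ((α + 1) / 2) hc hs hp
  constructor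
  · have key := hG.comp aux_tendsto_atanh_zero
    refine tendsto_atTop_mono' _ ?_ key
    filter_upwards [Ioo_mem_nhdsGT_of_mem (show (0:ℝ) ∈ Set.Ico 0 1 by norm_num)]
      with κ hκ
    obtain ⟨h0, h1⟩ := hκ
    set u := atanh (1 - 2 * κ) with hu
    have hR : (0:ℝ) < (1 + u ^ 2 / (α * ψ ^ 2)) ^ (-((α + 1) / 2)) :=
      Real.rpow_pos_of_pos (by positivity) _
    have hbound : Real.exp (2 * u) ≤ κ⁻¹ * (1 - κ)⁻¹ := by
      rw [hu, aux_exp_atanh h0 h1, show κ⁻¹ * (1 - κ)⁻¹ = 1 / (κ * (1 - κ)) from by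
        rw [one_div, mul_inv], div_le_div_iff₀ h0 (by nlinarith)]
      nlinarith [mul_nonneg (mul_nonneg h0.le h0.le) (show (0:ℝ) ≤ 2 - κ by linarith)]
    show c * (Real.exp (2 * u) * (1 + u ^ 2 / (α * ψ ^ 2)) ^ (-((α + 1) / 2)))
        ≤ c * (κ⁻¹ * (1 - κ)⁻¹ * (1 + u ^ 2 / (α * ψ ^ 2)) ^ (-(α + 1) / 2))
    rw [hexp]
    exact mul_le_mul_of_nonneg_left
      (mul_le_mul_of_nonneg_right hbound hR.le) hc.le
  · have key := hG.comp aux_tendsto_atanh_one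
    refine tendsto_atTop_mono' _ ?_ key
    filter_upwards [Ioo_mem_nhdsLT_of_mem (show (1:ℝ) ∈ Set.Ioc 0 1 by norm_num)]
      with κ hκ
    obtain ⟨h0, h1⟩ := hκ
    set u := atanh (1 - 2 * κ) with hu
    have hR : (0:ℝ) < (1 + u ^ 2 / (α * ψ ^ 2)) ^ (-((α + 1) / 2)) :=
      Real.rpow_pos_of_pos (by positivity) _
    have hbound : Real.exp (2 * -u) ≤ κ⁻¹ * (1 - κ)⁻¹ := by
      rw [show 2 * -u = -(2 * u) by ring, Real.exp_neg, hu, aux_exp_atanh h0 h1,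
        inv_div, show κ⁻¹ * (1 - κ)⁻¹ = 1 / (κ * (1 - κ)) from by
          rw [one_div, mul_inv], div_le_div_iff₀ (by linarith) (by nlinarith)]
      nlinarith [mul_nonneg (show (0:ℝ) ≤ 1 - κ by linarith) (show (0:ℝ) ≤ 1 - κ^2 by nlinarith)]
    show c * (Real.exp (2 * -u) * (1 + (-u) ^ 2 / (α * ψ ^ 2)) ^ (-((α + 1) / 2)))
        ≤ c * (κ⁻¹ * (1 - κ)⁻¹ * (1 + u ^ 2 / (α * ψ ^ 2)) ^ (-(α + 1) / 2))
    rw [hexp, neg_sq]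
    exact mul_le_mul_of_nonneg_left
      (mul_le_mul_of_nonneg_right hbound hR.le) hc.le
end

section
/- Let ψ₁, ψ₂ > 0. The scale mixture integral ∫₀^∞ (2πλ²)^{−1/2} exp(−β²/(2λ²)) p_LL(λ|ψ₁,ψ₂) dλ equals (1/√(32π)) · [ (1/ψ₁)·E_{(1+ψ₁)/(2ψ₁)}(β²/2) + (1/ψ₂)·(2/β²)^{(1+ψ₂)/(2ψ₂)}·γ((1+ψ₂)/(2ψ₂), β²/2) ] for every β ≠ 0. -/
open MeasureTheory Real Set

/-- Generalized exponential integral E_n(x) = ∫₁^∞ e^{−xt} t^{−n} dt. -/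
noncomputable def genExpIntegral (n x : ℝ) : ℝ :=
  ∫ t in Ioi (1 : ℝ), Real.exp (-x * t) * t ^ (-n)

/-- Lower incomplete gamma function γ(s,x) = ∫₀^x v^{s−1} e^{−v} dv. -/
noncomputable def lowerGamma (s x : ℝ) : ℝ :=
  ∫ v in Ioc (0 : ℝ) x, v ^ (s - 1) * Real.exp (-v)

/-- Closed form for the marginal of β under a N(0,λ²) kernel and a log-Laplace
prior on λ with scales ψ₁, ψ₂ (Theorem: marginal distribution). -/
theorem log_laplace_marginal_closed_form (ψ₁ ψ₂ β : ℝ)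
    (h₁ : 0 < ψ₁) (h₂ : 0 < ψ₂) (hβ : β ≠ 0) :
    (∫ l in Ioi (0 : ℝ),
        (2 * π * l ^ 2) ^ (-(1 : ℝ) / 2) * Real.exp (-β ^ 2 / (2 * l ^ 2)) *
          (if l ≤ 1 then (1 / (2 * ψ₁)) * l ^ (-1 + 1 / ψ₁)
           else (1 / (2 * ψ₂)) * l ^ (-1 - 1 / ψ₂))) =
      (1 / Real.sqrt (32 * π)) *
        ((1 / ψ₁) * genExpIntegral ((1 + ψ₁) / (2 * ψ₁)) (β ^ 2 / 2) +
          (1 / ψ₂) * (2 / β ^ 2) ^ ((1 + ψ₂) / (2 * ψ₂)) *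
            lowerGamma ((1 + ψ₂) / (2 * ψ₂)) (β ^ 2 / 2)) := by
  set x : ℝ := β ^ 2 / 2 with hxdef
  have hx : 0 < x := by positivity
  set F : ℝ → ℝ := fun l =>
    (2 * π * l ^ 2) ^ (-(1 : ℝ) / 2) * Real.exp (-β ^ 2 / (2 * l ^ 2)) *
      (if l ≤ 1 then (1 / (2 * ψ₁)) * l ^ (-1 + 1 / ψ₁)
       else (1 / (2 * ψ₂)) * l ^ (-1 - 1 / ψ₂)) with hF
  set n : ℝ := (1 + ψ₁) / (2 * ψ₁) with hn
  set s : ℝ := (1 + ψ₂) / (2 * ψ₂) with hs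
  have hn0 : 0 < n := by positivity
  have hs0 : 0 < s := by positivity
  -- the master constant
  have hC : (1 / Real.sqrt (32 * π)) = (2 * π) ^ (-(1:ℝ)/2) / 4 := by
    have h32 : (32 : ℝ) * π = 4 ^ 2 * (2 * π) := by ring
    rw [h32, Real.sqrt_mul (by positivity), Real.sqrt_sq (by norm_num),
      show (-(1:ℝ)/2) = -(1/2) by ring, Real.rpow_neg (by positivity), ← Real.sqrt_eq_rpow]
    rw [eq_div_iff (by norm_num), div_mul_eq_mul_div, one_mul, inv_eq_one_div,
      div_eq_div_iff (by positivity) (by positivity)]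
    ring
  ---------------------------------------------------------------------------
  -- Part 1 : substitution  φ t = t ^ (-1/2),  Ioi 1 → Ioo 0 1
  ---------------------------------------------------------------------------
  set φ : ℝ → ℝ := fun t => t ^ (-(1:ℝ)/2) with hφ
  have himg1 : φ '' Ioi 1 = Ioo 0 1 := by
    ext y
    constructor
    · rintro ⟨t, ht, rfl⟩
      have ht1 : (1:ℝ) < t := ht
      exact ⟨Real.rpow_pos_of_pos (lt_trans one_pos ht1) _,
        Real.rpow_lt_one_of_one_lt_of_neg ht1 (by norm_num)⟩
    · rintro ⟨hy0, hy1⟩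
      refine ⟨y ^ (-2:ℝ), ?_, ?_⟩
      · exact (Real.one_lt_rpow_iff_of_pos hy0).2 (Or.inr ⟨hy1, by norm_num⟩)
      · simp only [hφ]
        rw [← Real.rpow_mul hy0.le]
        norm_num
  have hd1 : ∀ t ∈ Ioi (1:ℝ), HasDerivWithinAt φ ((-(1:ℝ)/2) * t ^ (-(1:ℝ)/2 - 1)) (Ioi 1) t := by
    intro t ht
    exact (Real.hasDerivAt_rpow_const (Or.inl (ne_of_gt (lt_trans one_pos ht)))).hasDerivWithinAt
  have hinj1 : InjOn φ (Ioi 1) := by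
    refine (Real.rpow_left_injOn (x := -(1:ℝ)/2) (by norm_num)).mono ?_
    intro t ht
    exact le_of_lt (lt_trans one_pos (mem_Ioi.mp ht))
  -- pointwise identity on Ioi 1 for part 1
  have hpt1 : ∀ t ∈ Ioi (1:ℝ),
      |(-(1:ℝ)/2) * t ^ (-(1:ℝ)/2 - 1)| • F (φ t)
        = ((2 * π) ^ (-(1:ℝ)/2) / (4 * ψ₁)) * (Real.exp (-x * t) * t ^ (-n)) := by
    intro t ht
    have ht1 : (1:ℝ) < t := ht
    have ht0 : (0:ℝ) < t := lt_trans one_pos ht1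
    have hu0 : 0 < t ^ (-(1:ℝ)/2) := Real.rpow_pos_of_pos ht0 _
    have hu1 : t ^ (-(1:ℝ)/2) ≤ 1 :=
      le_of_lt (Real.rpow_lt_one_of_one_lt_of_neg ht1 (by norm_num))
    have hsq : (t ^ (-(1:ℝ)/2)) ^ (2:ℕ) = t ^ (-1:ℝ) := by
      rw [← Real.rpow_natCast (t ^ (-(1:ℝ)/2)) 2, ← Real.rpow_mul ht0.le]
      norm_num
    have harg : -β ^ 2 / (2 * t ^ (-1:ℝ)) = -x * t := by
      rw [Real.rpow_neg_one]
      field_simp [hxdef]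
      rw [hxdef]; ring
    simp only [hF, hφ, smul_eq_mul, if_pos hu1, hsq, harg]
    rw [Real.mul_rpow (by positivity) (by positivity : (0:ℝ) ≤ t ^ (-1:ℝ)),
      ← Real.rpow_mul ht0.le, ← Real.rpow_mul ht0.le, abs_mul,
      abs_of_pos (Real.rpow_pos_of_pos ht0 _),
      show |(-(1:ℝ)/2)| = 1/2 by rw [abs_div, abs_neg, abs_one]; norm_num,
      show (-n) = (-(1:ℝ)/2 - 1) + (-1 * (-(1:ℝ)/2)) + (-(1:ℝ)/2 * (-1 + 1/ψ₁)) by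
        rw [hn]; field_simp; ring,
      Real.rpow_add ht0, Real.rpow_add ht0]
    ring
  -- the E_n integrand is integrable on Ioi 1
  have hgE : IntegrableOn (fun t : ℝ => Real.exp (-x * t) * t ^ (-n)) (Ioi 1) := by
    have hcont : ContinuousOn (fun t : ℝ => Real.exp (-x * t) * t ^ (-n)) (Ioi 1) := by
      apply ContinuousOn.mul
      · exact (Real.continuous_exp.comp (continuous_const.mul continuous_id)).continuousOn
      · intro t ht
        exact (Real.continuousAt_rpow_const t (-n)
          (Or.inl (ne_of_gt (lt_trans one_pos ht)))).continuousWithinAt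
    refine Integrable.mono (exp_neg_integrableOn_Ioi 1 hx)
      (hcont.aestronglyMeasurable measurableSet_Ioi) ?_
    rw [ae_restrict_iff' measurableSet_Ioi]
    filter_upwards with t ht
    have ht0 : (0:ℝ) < t := lt_trans one_pos ht
    rw [norm_mul]
    simp only [Real.norm_eq_abs]
    rw [abs_of_pos (Real.exp_pos _), abs_of_pos (Real.rpow_pos_of_pos ht0 _)]
    nth_rewrite 2 [← mul_one (Real.exp (-x * t))]
    exact mul_le_mul_of_nonneg_left
      (Real.rpow_le_one_of_one_le_of_nonpos (le_of_lt ht) (by linarith [hn0]))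
      (Real.exp_pos _).le
  -- part-1 value and integrability
  have hval1 : ∫ l in Ioo (0:ℝ) 1, F l
      = ((2 * π) ^ (-(1:ℝ)/2) / (4 * ψ₁)) * genExpIntegral n x := by
    rw [← himg1, integral_image_eq_integral_abs_deriv_smul measurableSet_Ioi hd1 hinj1 F,
      setIntegral_congr_fun measurableSet_Ioi hpt1, integral_const_mul]
    rfl
  have hI1 : IntegrableOn F (Ioo 0 1) := by
    rw [← himg1, integrableOn_image_iff_integrableOn_abs_deriv_smul measurableSet_Ioi hd1 hinj1 F]
    exact IntegrableOn.congr_fun (hgE.const_mul ((2 * π) ^ (-(1:ℝ)/2) / (4 * ψ₁)))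
      (fun t ht => (hpt1 t ht).symm) measurableSet_Ioi
  ---------------------------------------------------------------------------
  -- Part 2 : substitution  f2 v = x^(1/2) * v ^ (-1/2),  Ioo 0 x → Ioi 1
  ---------------------------------------------------------------------------
  set f2 : ℝ → ℝ := fun v => x ^ ((1:ℝ)/2) * v ^ (-(1:ℝ)/2) with hf2
  have hone_lt : ∀ v ∈ Ioo (0:ℝ) x, 1 < f2 v := by
    rintro v ⟨hv0, hvx⟩
    have : f2 v = (x / v) ^ ((1:ℝ)/2) := by
      simp only [hf2]
      rw [Real.div_rpow hx.le hv0.le, show (-(1:ℝ)/2) = -((1:ℝ)/2) by norm_num,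
        Real.rpow_neg hv0.le]
      exact (div_eq_mul_inv _ _).symm
    rw [this]
    exact (Real.one_lt_rpow_iff_of_pos (div_pos hx hv0)).2
      (Or.inl ⟨(one_lt_div hv0).2 hvx, by norm_num⟩)
  have himg2 : f2 '' Ioo 0 x = Ioi 1 := by
    ext y
    constructor
    · rintro ⟨v, hv, rfl⟩
      exact hone_lt v hv
    · intro hy
      have hy1 : (1:ℝ) < y := hy
      have hy0 : (0:ℝ) < y := lt_trans one_pos hy1
      refine ⟨x * y ^ (-2:ℝ), ⟨by positivity, ?_⟩, ?_⟩
      · exact mul_lt_of_lt_one_right hx (Real.rpow_lt_one_of_one_lt_of_neg hy1 (by norm_num))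
      · simp only [hf2]
        rw [Real.mul_rpow hx.le (by positivity), ← Real.rpow_mul hy0.le,
          ← mul_assoc, ← Real.rpow_add hx]
        norm_num
  have hd2 : ∀ v ∈ Ioo (0:ℝ) x, HasDerivWithinAt f2
      (x ^ ((1:ℝ)/2) * ((-(1:ℝ)/2) * v ^ (-(1:ℝ)/2 - 1))) (Ioo 0 x) v := by
    rintro v ⟨hv0, hvx⟩
    exact ((Real.hasDerivAt_rpow_const (Or.inl hv0.ne')).const_mul _).hasDerivWithinAt
  have hinj2 : InjOn f2 (Ioo 0 x) := by
    rintro a ⟨ha0, _⟩ b ⟨hb0, _⟩ hab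
    have := mul_left_cancel₀ (ne_of_gt (Real.rpow_pos_of_pos hx ((1:ℝ)/2))) hab
    exact Real.rpow_left_injOn (x := -(1:ℝ)/2) (by norm_num) ha0.le hb0.le this
  -- pointwise identity on Ioo 0 x for part 2
  have hpt2 : ∀ v ∈ Ioo (0:ℝ) x,
      |x ^ ((1:ℝ)/2) * ((-(1:ℝ)/2) * v ^ (-(1:ℝ)/2 - 1))| • F (f2 v)
        = ((2 * π) ^ (-(1:ℝ)/2) / (4 * ψ₂) * x ^ (-s)) * (v ^ (s-1) * Real.exp (-v)) := by
    rintro v hv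
    obtain ⟨hv0, hvx⟩ := hv
    have hgt : 1 < x ^ ((1:ℝ)/2) * v ^ (-(1:ℝ)/2) := hone_lt v ⟨hv0, hvx⟩
    have hsq2 : (x ^ ((1:ℝ)/2) * v ^ (-(1:ℝ)/2)) ^ (2:ℕ) = x * v ^ (-1:ℝ) := by
      rw [mul_pow, ← Real.rpow_natCast (x ^ ((1:ℝ)/2)) 2,
        ← Real.rpow_natCast (v ^ (-(1:ℝ)/2)) 2, ← Real.rpow_mul hx.le,
        ← Real.rpow_mul hv0.le]
      norm_num
    have harg : -β ^ 2 / (2 * (x * v ^ (-1:ℝ))) = -v := by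
      rw [Real.rpow_neg_one, hxdef]
      field_simp
    simp only [hF, hf2, smul_eq_mul, if_neg (not_le.2 hgt), hsq2, harg]
    rw [show (2 * π * (x * v ^ (-1:ℝ))) = (2 * π) * x * v ^ (-1:ℝ) by ring,
      Real.mul_rpow (by positivity) (by positivity : (0:ℝ) ≤ v ^ (-1:ℝ)),
      Real.mul_rpow (by positivity) hx.le,
      ← Real.rpow_mul hv0.le,
      Real.mul_rpow (by positivity : (0:ℝ) ≤ x ^ ((1:ℝ)/2)) (by positivity : (0:ℝ) ≤ v ^ (-(1:ℝ)/2)),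
      ← Real.rpow_mul hx.le, ← Real.rpow_mul hv0.le,
      abs_mul, abs_mul, abs_of_pos (Real.rpow_pos_of_pos hx _),
      abs_of_pos (Real.rpow_pos_of_pos hv0 _),
      show |(-(1:ℝ)/2)| = 1/2 by rw [abs_div, abs_neg, abs_one]; norm_num,
      show (-s) = ((1:ℝ)/2) + (-(1:ℝ)/2) + ((1:ℝ)/2 * (-1 - 1/ψ₂)) by
        rw [hs]; field_simp; ring,
      show (s - 1) = (-(1:ℝ)/2 - 1) + (-1 * (-(1:ℝ)/2)) + (-(1:ℝ)/2 * (-1 - 1/ψ₂)) by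
        rw [hs]; field_simp; ring,
      Real.rpow_add hx, Real.rpow_add hx, Real.rpow_add hv0, Real.rpow_add hv0]
    ring
  -- the incomplete-gamma integrand is integrable on Ioo 0 x
  have hgG : IntegrableOn (fun v : ℝ => v ^ (s - 1) * Real.exp (-v)) (Ioo 0 x) := by
    refine IntegrableOn.congr_fun
      (((Real.GammaIntegral_convergent hs0).mono_set Ioo_subset_Ioi_self)) ?_ measurableSet_Ioo
    intro v _
    exact mul_comm _ _
  have hval2 : ∫ l in Ioi (1:ℝ), F l
      = ((2 * π) ^ (-(1:ℝ)/2) / (4 * ψ₂) * x ^ (-s)) * lowerGamma s x := by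
    rw [← himg2, integral_image_eq_integral_abs_deriv_smul measurableSet_Ioo hd2 hinj2 F,
      setIntegral_congr_fun measurableSet_Ioo hpt2, integral_const_mul, lowerGamma,
      integral_Ioc_eq_integral_Ioo]
  have hI2 : IntegrableOn F (Ioi 1) := by
    rw [← himg2, integrableOn_image_iff_integrableOn_abs_deriv_smul measurableSet_Ioo hd2 hinj2 F]
    exact IntegrableOn.congr_fun (hgG.const_mul ((2 * π) ^ (-(1:ℝ)/2) / (4 * ψ₂) * x ^ (-s)))
      (fun v hv => (hpt2 v hv).symm) measurableSet_Ioo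
  ---------------------------------------------------------------------------
  -- Assembly
  ---------------------------------------------------------------------------
  have hIoc : IntegrableOn F (Ioc 0 1) := by
    rw [IntegrableOn, Measure.restrict_congr_set Ioo_ae_eq_Ioc.symm]
    exact hI1
  rw [show Ioi (0:ℝ) = Ioc 0 1 ∪ Ioi 1 from (Ioc_union_Ioi_eq_Ioi zero_le_one).symm,
    setIntegral_union (Ioc_disjoint_Ioi le_rfl) measurableSet_Ioi hIoc hI2,
    integral_Ioc_eq_integral_Ioo, hval1, hval2, hC]
  have h2β : (2 / β ^ 2 : ℝ) = x⁻¹ := by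
    rw [hxdef]
    field_simp
  rw [h2β, Real.inv_rpow hx.le, ← Real.rpow_neg hx.le]
  field_simp
end

section
/- The conditional density p(ξ) ∝ exp(−m·e^{−2ξ} − ξ − ξ²/(2v)) on ℝ, with parameters m > 0 and v > 0, is log-concave and has a unique mode at ξ′ = (1/2)·W(4 e^{2v} m v) − v, where W is the Lambert W function (the inverse of w ↦ w e^w on [0, ∞)). -/
open Real

private lemma hasDerivL (m v ξ : ℝ) (hv : 0 < v) :
    HasDerivAt (fun ξ : ℝ => m * Real.exp (-2 * ξ) + ξ + ξ ^ 2 / (2 * v))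
      (1 + ξ / v - 2 * m * Real.exp (-2 * ξ)) ξ := by
  have h1 : HasDerivAt (fun ξ : ℝ => -2 * ξ) (-2) ξ := by
    simpa using (hasDerivAt_id ξ).const_mul (-2)
  have h2 := (h1.exp).const_mul m
  have h3 := (hasDerivAt_pow 2 ξ).div_const (2 * v)
  have h := (h2.add (hasDerivAt_id ξ)).add h3
  refine h.congr_deriv ?_
  field_simp
  ring

private lemma derivMono (m v : ℝ) (hm : 0 < m) (hv : 0 < v) :
    StrictMono (fun ξ : ℝ => 1 + ξ / v - 2 * m * Real.exp (-2 * ξ)) := by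
  intro a b hab
  have he : Real.exp (-2 * b) < Real.exp (-2 * a) := Real.exp_lt_exp.mpr (by linarith)
  have hd : a / v < b / v := by gcongr
  have := mul_lt_mul_of_pos_left he (by positivity : (0:ℝ) < 2 * m)
  simp only []
  nlinarith

/-- The conditional density p(ξ) ∝ exp(−m e^{−2ξ} − ξ − ξ²/(2v)), m, v > 0,
is log-concave (its negative log L is strictly convex) and has unique mode at
ξ′ = W/2 − v, where W = W(4 e^{2v} m v) is the Lambert W value, i.e. the
nonnegative solution of W e^W = 4 e^{2v} m v. -/
theorem conditional_xi_log_concave_unique_mode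
    (m v W : ℝ) (hm : 0 < m) (hv : 0 < v) (hW : 0 ≤ W)
    (hW_eq : W * Real.exp W = 4 * Real.exp (2 * v) * m * v) :
    StrictConvexOn ℝ Set.univ
      (fun ξ : ℝ => m * Real.exp (-2 * ξ) + ξ + ξ ^ 2 / (2 * v)) ∧
    ∀ ξ : ℝ, ξ ≠ (1 / 2) * W - v →
      m * Real.exp (-2 * ((1 / 2) * W - v)) + ((1 / 2) * W - v) +
          ((1 / 2) * W - v) ^ 2 / (2 * v) <
        m * Real.exp (-2 * ξ) + ξ + ξ ^ 2 / (2 * v) := by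
  set f : ℝ → ℝ := fun ξ : ℝ => m * Real.exp (-2 * ξ) + ξ + ξ ^ 2 / (2 * v) with hf
  set f' : ℝ → ℝ := fun ξ : ℝ => 1 + ξ / v - 2 * m * Real.exp (-2 * ξ) with hf'
  have hderiv : ∀ ξ : ℝ, HasDerivAt f (f' ξ) ξ := fun ξ => hasDerivL m v ξ hv
  have hderiv' : deriv f = f' := funext fun ξ => (hderiv ξ).deriv
  have hmono : StrictMono f' := derivMono m v hm hv
  have hcont : Continuous f := by
    apply Continuous.add
    apply Continuous.add
    · exact continuous_const.mul (Real.continuous_exp.comp (by continuity))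
    · exact continuous_id
    · exact (continuous_pow 2).div_const _
  have hconv : StrictConvexOn ℝ Set.univ f :=
    StrictMono.strictConvexOn_univ_of_deriv hcont (hderiv' ▸ hmono)
  refine ⟨hconv, ?_⟩
  set ξ' : ℝ := (1 / 2) * W - v with hxi
  -- stationarity at ξ'
  have hexpW : Real.exp W ≠ 0 := Real.exp_ne_zero W
  have hW' : W = 4 * Real.exp (2 * v) * m * v * Real.exp (-W) := by
    have h := congrArg (· * Real.exp (-W)) hW_eq
    simpa [mul_assoc, ← Real.exp_add] using h
  have hexp : Real.exp (-2 * ξ') = Real.exp (2 * v) * Real.exp (-W) := by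
    rw [← Real.exp_add]; congr 1; rw [hxi]; ring
  have hstat : f' ξ' = 0 := by
    simp only [hf', hexp, hxi]
    field_simp
    rw [show -(W - 2 * v) = 2 * v + -W by ring, Real.exp_add]
    nlinarith [hW']
  -- strict monotone on [ξ', ∞), strict anti on (-∞, ξ']
  have hposd : ∀ x ∈ interior (Set.Ici ξ'), 0 < deriv f x := by
    intro x hx
    rw [interior_Ici] at hx
    rw [hderiv']
    have := hmono (hx : ξ' < x)
    linarith [hstat ▸ this]
  have hnegd : ∀ x ∈ interior (Set.Iic ξ'), deriv f x < 0 := by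
    intro x hx
    rw [interior_Iic] at hx
    rw [hderiv']
    have := hmono (hx : x < ξ')
    linarith [hstat ▸ this]
  have hMono := strictMonoOn_of_deriv_pos (convex_Ici ξ') hcont.continuousOn hposd
  have hAnti := strictAntiOn_of_deriv_neg (convex_Iic ξ') hcont.continuousOn hnegd
  intro ξ hne
  rcases lt_or_gt_of_ne hne with h | h
  · exact hAnti (le_of_lt h) (le_refl ξ') h
  · exact hMono (le_refl ξ') (le_of_lt h) h
end
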